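/- arXiv:1111.3573 — 2 statements merged into one kernel-verified Lean document; each statement's English description precedes it below -/
import Mathlib

section
/- For all real ℓ ≥ 2·arcsinh(1), the area of a hyperbolic disk of radius r(ℓ)/2, namely 2π(cosh(r(ℓ)/2) − 1) where r(ℓ) = arcsinh(1/(2·sinh(ℓ/4))), satisfies 2π(cosh(r(ℓ)/2) − 1) > (π/4)·exp(−ℓ/2). -/
open Real

private lemma aux_key (c w : ℝ) (hc1 : 1 ≤ c) (hw24 : (12:ℝ)/5 ≤ w)
    (hmain : 4 * c ^ 2 * (c ^ 2 - 1) * (w - 1) ^ 2 = w) :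
    8 * (c - 1) * w > 1 := by
  have hw0 : (0:ℝ) < w := by linarith
  have hA : 8 * (c - 1) * (w - 1) ^ 2 ≤ w := by
    nlinarith [hmain, mul_nonneg (mul_nonneg (sq_nonneg (c - 1))
      (by nlinarith : (0:ℝ) ≤ c ^ 2 + 2 * c + 2)) (sq_nonneg (w - 1))]
  have hB : c ≤ 29/25 := by
    nlinarith [hA, hw24, sq_nonneg (w - 12/5)]
  have h4 : (0:ℝ) ≤ 4 - 2 * c - c ^ 2 := by nlinarith [hB, hc1]
  have hC : w ≤ (8 + 24 * (c - 1)) * (c - 1) * (w - 1) ^ 2 := by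
    nlinarith [hmain, mul_nonneg (mul_nonneg (sq_nonneg (c - 1)) h4) (sq_nonneg (w - 1))]
  by_contra hk
  push_neg at hk
  have hC2 : w * w ≤ ((8 + 24 * (c - 1)) * (c - 1) * (w - 1) ^ 2) * w :=
    mul_le_mul_of_nonneg_right hC hw0.le
  have hPnn : (0:ℝ) ≤ (8 + 24 * (c - 1)) * (w - 1) ^ 2 :=
    mul_nonneg (by linarith) (sq_nonneg _)
  have hP : (0:ℝ) ≤ (1 - 8 * (c - 1) * w) * ((8 + 24 * (c - 1)) * (w - 1) ^ 2) :=
    mul_nonneg (by linarith) hPnn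
  have step1 : 8 * (w * w) ≤ (8 + 24 * (c - 1)) * (w - 1) ^ 2 := by nlinarith [hC2, hP]
  have hP2 : (0:ℝ) ≤ (1 - 8 * (c - 1) * w) * (3 * (w - 1) ^ 2) :=
    mul_nonneg (by linarith) (by positivity)
  have step2 : 24 * (c - 1) * (w - 1) ^ 2 * w ≤ 3 * (w - 1) ^ 2 := by nlinarith [hP2]
  have step1' : 8 * (w * w) * w ≤ ((8 + 24 * (c - 1)) * (w - 1) ^ 2) * w :=
    mul_le_mul_of_nonneg_right step1 hw0.le
  nlinarith [step1', step2, hw24, sq_nonneg (w - 12/5), mul_pos hw0 hw0]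

theorem area_small_disk_lower_bound (ℓ : ℝ) (hℓ : 2 * Real.arsinh 1 ≤ ℓ) :
    2 * Real.pi * (Real.cosh (Real.arsinh (1 / (2 * Real.sinh (ℓ / 4))) / 2) - 1) >
      Real.pi / 4 * Real.exp (-ℓ / 2) := by
  have ha1 : (0:ℝ) < Real.arsinh 1 := Real.arsinh_pos_iff.mpr one_pos
  have hl0 : 0 < ℓ := by linarith
  set t : ℝ := 1 / (2 * Real.sinh (ℓ / 4)) with htdef
  set c : ℝ := Real.cosh (Real.arsinh t / 2) with hcdef
  set v : ℝ := Real.exp (ℓ / 4) with hvdef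
  set w : ℝ := Real.exp (ℓ / 2) with hwdef
  clear_value t c
  have hv1 : 1 < v := by
    rw [hvdef]; exact Real.one_lt_exp_iff.mpr (by linarith)
  have hv2 : v ^ 2 = w := by
    rw [hvdef, hwdef, sq, ← Real.exp_add]; congr 1; ring
  clear_value v w
  have hw1 : 1 < w := by nlinarith
  have hw0 : (0:ℝ) < w := by linarith
  have hw24 : (12:ℝ)/5 ≤ w := by
    have h1 : Real.exp (Real.arsinh 1) ≤ w := by
      rw [hwdef]; exact Real.exp_le_exp.mpr (by linarith)
    rw [Real.exp_arsinh, show (1:ℝ) + 1 ^ 2 = 2 by norm_num] at h1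
    have h2 : (7:ℝ)/5 ≤ Real.sqrt 2 := by
      nlinarith [Real.sq_sqrt (by norm_num : (0:ℝ) ≤ 2), Real.sqrt_nonneg 2]
    linarith
  have hsinh : 2 * Real.sinh (ℓ / 4) = v - v⁻¹ := by
    rw [Real.sinh_eq, hvdef, Real.exp_neg]; ring
  have hsp : 0 < v - v⁻¹ := by
    have : v⁻¹ < 1 := inv_lt_one_of_one_lt₀ hv1
    linarith
  have ht : t * (w - 1) = v := by
    rw [htdef, hsinh]
    rw [div_mul_eq_mul_div, one_mul, div_eq_iff (ne_of_gt hsp)]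
    have hvne : v ≠ 0 := by positivity
    field_simp
    nlinarith [hv2]
  have h2 : t ^ 2 * (w - 1) ^ 2 = w := by
    calc t ^ 2 * (w - 1) ^ 2 = (t * (w - 1)) ^ 2 := by ring
    _ = v ^ 2 := by rw [ht]
    _ = w := hv2
  have hc1 : 1 ≤ c := hcdef ▸ Real.one_le_cosh _
  have hcosh2 : Real.cosh (Real.arsinh t) = 2 * c ^ 2 - 1 := by
    have e1 := Real.cosh_two_mul (Real.arsinh t / 2)
    have e2 := Real.cosh_sq (Real.arsinh t / 2)
    rw [show Real.arsinh t = 2 * (Real.arsinh t / 2) by ring, e1]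
    rw [hcdef]; linarith
  have hrel0 : (2 * c ^ 2 - 1) ^ 2 = 1 + t ^ 2 := by
    rw [← hcosh2, Real.cosh_arsinh]
    exact Real.sq_sqrt (by positivity)
  have hmain : 4 * c ^ 2 * (c ^ 2 - 1) * (w - 1) ^ 2 = w := by
    linear_combination (w - 1) ^ 2 * hrel0 + h2
  have key : 8 * (c - 1) * w > 1 := aux_key c w hc1 hw24 hmain
  have hexp : Real.exp (-ℓ / 2) = w⁻¹ := by
    rw [hwdef, ← Real.exp_neg]; congr 1; ring
  rw [gt_iff_lt, hexp, ← div_eq_mul_inv, div_lt_iff₀ hw0]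
  nlinarith [mul_pos Real.pi_pos (by linarith : (0:ℝ) < 8 * (c - 1) * w - 1)]
end

section
/- If ℓ ≤ 2·log(g) + C for a constant C > 0 and g ≥ 2, then θ_ℓ = arcsin(1/(2·cosh(ℓ/4))) satisfies θ_ℓ ≥ c/√g for some constant c > 0 depending only on C; consequently at most ⌊2π/θ_ℓ⌋ ≤ C'·√g systoles of a hyperbolic surface can pass through a single point, for some constant C' depending only on C. -/
theorem systoles_through_a_point (C : ℝ) (hC : 0 < C) :
    ∃ c : ℝ, 0 < c ∧ ∃ C' : ℝ, 0 < C' ∧ ∀ g : ℕ, 2 ≤ g → ∀ ℓ : ℝ, 0 < ℓ →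
      ℓ ≤ 2 * Real.log g + C →
        Real.arcsin (1 / (2 * Real.cosh (ℓ / 4))) ≥ c / Real.sqrt g ∧
          2 * Real.pi / Real.arcsin (1 / (2 * Real.cosh (ℓ / 4))) ≤ C' * Real.sqrt g := by
  set c : ℝ := Real.exp (-(C / 4)) / 2 with hc
  have hcpos : 0 < c := by positivity
  refine ⟨c, hcpos, 2 * Real.pi / c, by positivity, ?_⟩
  intro g hg ℓ hℓ hℓle
  have hgpos : (0:ℝ) < g := by exact_mod_cast Nat.lt_of_lt_of_le (by norm_num) hg
  have hsg : 0 < Real.sqrt g := Real.sqrt_pos.mpr hgpos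
  have hch : (1:ℝ) ≤ Real.cosh (ℓ / 4) := Real.one_le_cosh _
  have hchpos : (0:ℝ) < Real.cosh (ℓ / 4) := lt_of_lt_of_le one_pos hch
  set x : ℝ := 1 / (2 * Real.cosh (ℓ / 4)) with hx
  have hxpos : 0 < x := by positivity
  have hxle : x ≤ 1 := by
    rw [hx, div_le_one (by positivity)]
    linarith
  -- cosh bound
  have hcosh_le : Real.cosh (ℓ / 4) ≤ Real.exp (ℓ / 4) := by
    rw [Real.cosh_eq]
    have : Real.exp (-(ℓ/4)) ≤ Real.exp (ℓ/4) := Real.exp_le_exp.mpr (by linarith)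
    linarith
  have hsqrt : Real.sqrt g = Real.exp (Real.log g / 2) := by
    rw [Real.exp_half, Real.exp_log hgpos]
  have hexp_le : Real.exp (ℓ / 4) ≤ Real.exp (C / 4) * Real.sqrt g := by
    rw [hsqrt, ← Real.exp_add]
    apply Real.exp_le_exp.mpr
    linarith
  have hxge : c / Real.sqrt g ≤ x := by
    rw [hx, hc, div_div, div_le_div_iff₀ (by positivity) (by positivity)]
    calc Real.exp (-(C/4)) * (2 * Real.cosh (ℓ/4))
        ≤ Real.exp (-(C/4)) * (2 * (Real.exp (C/4) * Real.sqrt g)) := by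
          have := hcosh_le.trans hexp_le
          gcongr
      _ = (Real.exp (-(C/4)) * Real.exp (C/4)) * (2 * Real.sqrt g) := by ring
      _ = 1 * (2 * Real.sqrt g) := by rw [← Real.exp_add]; simp
  -- x ≤ arcsin x
  have harc : x ≤ Real.arcsin x := by
    have h0 : 0 ≤ Real.arcsin x := Real.arcsin_nonneg.mpr hxpos.le
    have := Real.sin_le h0
    rwa [Real.sin_arcsin (by linarith) hxle] at this
  have hθ : c / Real.sqrt g ≤ Real.arcsin x := le_trans hxge harc
  refine ⟨hθ, ?_⟩
  have hθpos : 0 < Real.arcsin x := lt_of_lt_of_le (by positivity) hθ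
  have h2π : (0:ℝ) ≤ 2 * Real.pi := by positivity
  calc 2 * Real.pi / Real.arcsin x ≤ 2 * Real.pi / (c / Real.sqrt g) := by
        gcongr
    _ = 2 * Real.pi / c * Real.sqrt g := by
        field_simp
end
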